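/- arXiv:0803.2795 — 2 statements merged into one kernel-verified Lean document; each statement's English description precedes it below -/
import Mathlib

section
/- For distinct complex numbers a, b₁, b₂ in a neighborhood where all factors are defined, the function J*(a; b₁, b₂) := e^{−N(a+b₁)} z(a+b₁) z(−a−b₁) ((z'/z)(b₂−b₁) − (z'/z)(b₂+a)) + e^{−N(a+b₂)} z(a+b₂) z(−a−b₂) ((z'/z)(b₁−b₂) − (z'/z)(b₁+a)) is regular at b₁ = b₂: the apparent poles of (z'/z)(b₂−b₁) and (z'/z)(b₁−b₂) cancel, so J* extends holomorphically across the diagonal b₁ = b₂. -/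
open Filter Topology

/-- `z(x) = 1/(1 - e^{-x})`. -/
noncomputable def zfun (x : ℂ) : ℂ := (1 - Complex.exp (-x))⁻¹

/-- The logarithmic derivative `z'/z`. -/
noncomputable def zlog (x : ℂ) : ℂ := deriv zfun x / zfun x

/-- The triple-correlation kernel
`J*(a;b₁,b₂) = e^{-N(a+b₁)} z(a+b₁)z(-a-b₁)((z'/z)(b₂-b₁) - (z'/z)(b₂+a))
             + e^{-N(a+b₂)} z(a+b₂)z(-a-b₂)((z'/z)(b₁-b₂) - (z'/z)(b₁+a))`. -/
noncomputable def Jstar3 (N : ℕ) (a b₁ b₂ : ℂ) : ℂ :=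
  Complex.exp (-(N : ℂ) * (a + b₁)) * zfun (a + b₁) * zfun (-(a + b₁)) *
      (zlog (b₂ - b₁) - zlog (b₂ + a))
    + Complex.exp (-(N : ℂ) * (a + b₂)) * zfun (a + b₂) * zfun (-(a + b₂)) *
      (zlog (b₁ - b₂) - zlog (b₁ + a))

noncomputable def Lfun (x : ℂ) : ℂ := -Complex.exp (-x) * (1 - Complex.exp (-x))⁻¹

lemma zlog_eq {x : ℂ} (h : Complex.exp (-x) ≠ 1) : zlog x = Lfun x := by
  have h0 : 1 - Complex.exp (-x) ≠ 0 := sub_ne_zero.2 (Ne.symm h)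
  have hd : HasDerivAt (fun x : ℂ => 1 - Complex.exp (-x)) (Complex.exp (-x)) x := by
    have : HasDerivAt (fun x : ℂ => Complex.exp (-x)) (-Complex.exp (-x)) x := by
      exact ((Complex.hasDerivAt_exp (-x)).comp x (hasDerivAt_neg x)).congr_deriv (by simp)
    exact ((hasDerivAt_const x (1:ℂ)).sub this).congr_deriv (by simp)
  have hz : HasDerivAt zfun (-Complex.exp (-x) / (1 - Complex.exp (-x))^2) x := hd.inv h0
  rw [zlog, hz.deriv, zfun, Lfun]
  field_simp

lemma Lfun_add {x : ℂ} (h : Complex.exp (-x) ≠ 1) : Lfun x + Lfun (-x) = 1 := by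
  have h2 : Complex.exp x ≠ 1 := by
    intro hx
    apply h
    have := Complex.exp_neg x
    rw [hx] at this; simpa using this
  have h0 : 1 - Complex.exp (-x) ≠ 0 := sub_ne_zero.2 (Ne.symm h)
  have h0' : 1 - Complex.exp x ≠ 0 := sub_ne_zero.2 (Ne.symm h2)
  have hee : Complex.exp (-x) * Complex.exp x = 1 := by
    rw [← Complex.exp_add]; simp
  rw [Lfun, Lfun, neg_neg]
  field_simp
  linear_combination hee

lemma exp_ne_one_of_small {u : ℂ} (hu : u ≠ 0) (h : ‖u‖ < 1) : Complex.exp u ≠ 1 := by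
  intro he
  obtain ⟨n, rfl⟩ := Complex.exp_eq_one_iff.mp he
  have hn : n ≠ 0 := by rintro rfl; simp at hu
  have h1 : (1:ℝ) ≤ |(n:ℝ)| := by exact_mod_cast Int.one_le_abs hn
  have hnorm : ‖(n:ℂ) * (2*(Real.pi:ℂ)*Complex.I)‖ = |(n:ℝ)| * (2*Real.pi) := by
    rw [norm_mul, norm_mul, norm_mul, Complex.norm_I]
    simp [Complex.norm_real, abs_of_pos Real.pi_pos]
  rw [hnorm] at h
  nlinarith [Real.pi_gt_three]

lemma analyticAt_dslope {f : ℂ → ℂ} {c : ℂ} (hf : AnalyticAt ℂ f c) :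
    AnalyticAt ℂ (dslope f c) c := by
  obtain ⟨p, hp⟩ := hf
  exact ⟨p.fslope, hp.has_fpower_series_dslope_fslope⟩

/-- `J*(a;b₁,b₂)` is regular at `b₁ = b₂`: the simple poles of `(z'/z)(b₂-b₁)` and
`(z'/z)(b₁-b₂)` cancel, and `J*` extends holomorphically across the diagonal. -/
theorem Jstar3_regular_on_diagonal (N : ℕ) (hN : 0 < N) (a c : ℂ)
    (hac : Complex.exp (-(a + c)) ≠ 1) :
    ∃ g : ℂ → ℂ, AnalyticAt ℂ g c ∧
      ∀ᶠ b₁ in 𝓝[≠] c, Jstar3 N a b₁ c = g b₁ := by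
  have hac' : Complex.exp (-(c + a)) ≠ 1 := by rwa [add_comm]
  have hexpac : Complex.exp (a + c) ≠ 1 := by
    intro hx
    apply hac
    rw [Complex.exp_neg, hx, inv_one]
  set E : ℂ → ℂ := fun x =>
    Complex.exp (-(N : ℂ) * (a + x)) * zfun (a + x) * zfun (-(a + x)) with hEdef
  -- analyticity of E at c
  have hA1 : AnalyticAt ℂ (fun x : ℂ => a + x) c := analyticAt_const.add analyticAt_id
  have hz1 : AnalyticAt ℂ (fun x : ℂ => zfun (a + x)) c := by
    simp only [zfun]
    exact (analyticAt_const.sub (analyticAt_cexp.comp hA1.neg)).inv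
      (sub_ne_zero.2 (Ne.symm hac))
  have hz2 : AnalyticAt ℂ (fun x : ℂ => zfun (-(a + x))) c := by
    simp only [zfun, neg_neg]
    exact (analyticAt_const.sub (analyticAt_cexp.comp hA1)).inv
      (sub_ne_zero.2 (Ne.symm hexpac))
  have hEan : AnalyticAt ℂ E c := by
    exact ((analyticAt_cexp.comp (analyticAt_const.mul hA1)).mul hz1).mul hz2
  have hq : AnalyticAt ℂ (dslope E c) c := analyticAt_dslope hEan
  have hr : AnalyticAt ℂ (dslope Complex.exp 0) 0 := analyticAt_dslope analyticAt_cexp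
  have hr0 : dslope Complex.exp 0 0 = 1 := by
    rw [dslope_same]; simp
  have hrcomp : AnalyticAt ℂ (fun b₁ : ℂ => dslope Complex.exp 0 (b₁ - c)) c := by
    have hsub : AnalyticAt ℂ (fun b₁ : ℂ => b₁ - c) c := analyticAt_id.sub analyticAt_const
    have h0 : AnalyticAt ℂ (dslope Complex.exp 0) ((fun b₁ : ℂ => b₁ - c) c) := by
      simp only [sub_self]
      exact hr
    exact AnalyticAt.comp (g := dslope Complex.exp 0) (f := fun b₁ : ℂ => b₁ - c) h0 hsub
  have hrcne : (fun b₁ : ℂ => dslope Complex.exp 0 (b₁ - c)) c ≠ 0 := by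
    simp [hr0]
  have hLb : AnalyticAt ℂ (fun b₁ : ℂ => Lfun (b₁ + a)) c := by
    simp only [Lfun]
    exact ((analyticAt_cexp.comp (analyticAt_id.add analyticAt_const).neg).neg).mul
      ((analyticAt_const.sub
        (analyticAt_cexp.comp (analyticAt_id.add analyticAt_const).neg)).inv
        (sub_ne_zero.2 (Ne.symm hac')))
  refine ⟨fun b₁ => E c + dslope E c b₁ * Complex.exp (b₁ - c) *
      (dslope Complex.exp 0 (b₁ - c))⁻¹ - E b₁ * Lfun (c + a) - E c * Lfun (b₁ + a),
    ?_, ?_⟩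
  · exact ((analyticAt_const.add ((hq.mul
      (analyticAt_cexp.comp (analyticAt_id.sub analyticAt_const))).mul
      (hrcomp.inv hrcne))).sub (hEan.mul analyticAt_const)).sub
      (analyticAt_const.mul hLb)
  · have ev1 : ∀ᶠ b₁ in 𝓝[≠] c, b₁ ≠ c := by
      filter_upwards [self_mem_nhdsWithin] with x hx using hx
    have ev2 : ∀ᶠ b₁ in 𝓝[≠] c, dist b₁ c < 1 :=
      eventually_nhdsWithin_of_eventually_nhds
        (eventually_of_mem (Metric.ball_mem_nhds c one_pos) (fun x hx => hx))
    have ev3 : ∀ᶠ b₁ in 𝓝[≠] c, Complex.exp (-(b₁ + a)) ≠ 1 := by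
      apply eventually_nhdsWithin_of_eventually_nhds
      have hcont : ContinuousAt (fun b₁ : ℂ => Complex.exp (-(b₁ + a))) c := by fun_prop
      exact hcont.eventually_ne hac'
    filter_upwards [ev1, ev2, ev3] with b₁ hb1 hdist hb3
    have hu : b₁ - c ≠ 0 := sub_ne_zero.2 hb1
    have hnorm : ‖b₁ - c‖ < 1 := by rwa [dist_eq_norm] at hdist
    have h1 : Complex.exp (b₁ - c) ≠ 1 := exp_ne_one_of_small hu hnorm
    have h2 : Complex.exp (c - b₁) ≠ 1 :=
      exp_ne_one_of_small (sub_ne_zero.2 (Ne.symm hb1)) (by rwa [norm_sub_rev])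
    have hz_cb : zlog (c - b₁) = Lfun (c - b₁) := zlog_eq (by rwa [neg_sub])
    have hz_bc : zlog (b₁ - c) = Lfun (b₁ - c) := zlog_eq (by rwa [neg_sub])
    have hz_ca : zlog (c + a) = Lfun (c + a) := zlog_eq hac'
    have hz_ba : zlog (b₁ + a) = Lfun (b₁ + a) := zlog_eq hb3
    have hsum : Lfun (b₁ - c) + Lfun (c - b₁) = 1 := by
      have := Lfun_add (x := b₁ - c) (by rwa [neg_sub])
      rwa [neg_sub] at this
    have hLsplit : Lfun (b₁ - c) = 1 - Lfun (c - b₁) := eq_sub_of_add_eq hsum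
    have hLc : Lfun (c - b₁) = -Complex.exp (b₁ - c) * (1 - Complex.exp (b₁ - c))⁻¹ := by
      rw [Lfun, neg_sub]
    have h1' : 1 - Complex.exp (b₁ - c) ≠ 0 := sub_ne_zero.2 (Ne.symm h1)
    have hEb : E b₁ = E c + (b₁ - c) * dslope E c b₁ := by
      have := sub_smul_dslope E c b₁
      rw [smul_eq_mul] at this
      linear_combination -this
    have hrkey : (b₁ - c) * dslope Complex.exp 0 (b₁ - c) = Complex.exp (b₁ - c) - 1 := by
      have := sub_smul_dslope Complex.exp 0 (b₁ - c)
      rw [smul_eq_mul] at this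
      simpa using this
    have hrne : dslope Complex.exp 0 (b₁ - c) ≠ 0 := by
      intro h0
      rw [h0, mul_zero] at hrkey
      exact (sub_ne_zero.2 h1) hrkey.symm
    have he1 : 1 - Complex.exp (b₁ - c) = -((b₁ - c) * dslope Complex.exp 0 (b₁ - c)) := by
      linear_combination hrkey
    show E b₁ * (zlog (c - b₁) - zlog (c + a)) + E c * (zlog (b₁ - c) - zlog (b₁ + a)) = _
    rw [hz_cb, hz_bc, hz_ca, hz_ba, hLsplit, hLc, hEb, he1]
    field_simp
    ring
end

section
/- With S(θ) = sin(Nθ/2)/sin(θ/2) and J*(a;b) = (z'/z)'(a+b) + e^{−N(a+b)} z(a+b) z(−a−b) where z(x)=1/(1−e^{−x}), the identity N² + J*(iu; −iv) + J*(−iu; iv) = N² − S(u−v)S(v−u) = det [[N, S(u−v)],[S(v−u), N]] holds for all real u ≠ v with u − v ∉ 2πℤ. -/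
open Matrix

/-- `J*(a;b) = (z'/z)'(a+b) + e^{-N(a+b)} z(a+b) z(-a-b)`. -/
noncomputable def Jstar2 (N : ℕ) (a b : ℂ) : ℂ :=
  deriv zlog (a + b) +
    Complex.exp (-(N : ℂ) * (a + b)) * zfun (a + b) * zfun (-(a + b))

/-- The sine kernel `S(θ) = sin(Nθ/2)/sin(θ/2)`. -/
noncomputable def sineKernel (N : ℕ) (θ : ℝ) : ℝ :=
  Real.sin (N * θ / 2) / Real.sin (θ / 2)

lemma zfun_hasDerivAt (x : ℂ) (h : 1 - Complex.exp (-x) ≠ 0) :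
    HasDerivAt zfun (-Complex.exp (-x) * zfun x ^ 2) x := by
  have hf : HasDerivAt (fun y : ℂ => 1 - Complex.exp (-y)) (Complex.exp (-x)) x := by
    have := ((Complex.hasDerivAt_exp (-x)).comp x (hasDerivAt_neg x)).const_sub 1
    simpa using this
  have := hf.inv h
  refine this.congr_deriv ?_
  simp only [zfun]
  field_simp

lemma zlog_eq_s17 (x : ℂ) : zlog x = -Complex.exp (-x) * zfun x := by
  by_cases h : 1 - Complex.exp (-x) = 0
  · simp [zlog, zfun, h]
  · have hz : zfun x ≠ 0 := by simp [zfun, h]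
    rw [zlog, (zfun_hasDerivAt x h).deriv]
    field_simp

lemma deriv_zlog (x : ℂ) (h : 1 - Complex.exp (-x) ≠ 0) :
    deriv zlog x = Complex.exp (-x) * zfun x ^ 2 := by
  have hz : HasDerivAt zlog
      (Complex.exp (-x) * zfun x + -Complex.exp (-x) * (-Complex.exp (-x) * zfun x ^ 2)) x := by
    have h1 : HasDerivAt (fun y : ℂ => -Complex.exp (-y)) (Complex.exp (-x)) x := by
      have := ((Complex.hasDerivAt_exp (-x)).comp x (hasDerivAt_neg x)).neg
      exact this.congr_deriv (by simp)
    have h2 := h1.mul (zfun_hasDerivAt x h)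
    have : zlog = fun y => -Complex.exp (-y) * zfun y := funext zlog_eq_s17
    rw [this]
    exact h2
  rw [hz.deriv]
  simp only [zfun]
  field_simp
  ring

lemma key (r R : ℂ) (hr : r ≠ 0) (hR : R ≠ 0) :
    (r*r)⁻¹ * (1 - (r*r)⁻¹)⁻¹ ^ 2 + (R*R)⁻¹ * (1 - (r*r)⁻¹)⁻¹ * (1 - r*r)⁻¹
      + (r*r) * (1 - r*r)⁻¹ ^ 2 + (R*R) * (1 - r*r)⁻¹ * (1 - (r*r)⁻¹)⁻¹
    = -(((R⁻¹ - R)) / ((r⁻¹ - r)) * (((R⁻¹ - R)) / ((r⁻¹ - r)))) := by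
  have e1 : 1 - (r*r)⁻¹ = -(1 - r*r) * (r*r)⁻¹ := by field_simp; ring
  have e2 : r⁻¹ - r = (1 - r*r) * r⁻¹ := by field_simp
  have e3 : R⁻¹ - R = (1 - R*R) * R⁻¹ := by field_simp
  rw [e1, e2, e3]
  simp only [mul_inv, inv_neg, inv_inv, div_eq_mul_inv, neg_mul, mul_neg, neg_neg]
  linear_combination
    ((1 - r*r)⁻¹^2 * r * r * (r * r⁻¹ + 1)) * mul_inv_cancel₀ hr +
    ((1 - r*r)⁻¹^2 * r * r * (R*R - 2) * (R * R⁻¹ + 1)) * mul_inv_cancel₀ hR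

lemma sineKernel_neg (N : ℕ) (θ : ℝ) : sineKernel N (-θ) = sineKernel N θ := by
  simp [sineKernel, mul_neg, neg_div, Real.sin_neg, div_neg]

/-- Pair correlation identity:
`N² + J*(iu;-iv) + J*(-iu;iv) = N² - S(u-v)S(v-u) = det [[N, S(u-v)],[S(v-u), N]]`
for real `u, v` with `u - v ∉ 2πℤ`. -/
theorem pair_correlation_det (N : ℕ) (hN : 0 < N) (u v : ℝ)
    (huv : ∀ k : ℤ, u - v ≠ 2 * Real.pi * k) :
    (N : ℂ) ^ 2 + Jstar2 N (Complex.I * u) (-(Complex.I * v))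
        + Jstar2 N (-(Complex.I * u)) (Complex.I * v)
      = (N : ℂ) ^ 2 - (sineKernel N (u - v) : ℂ) * (sineKernel N (v - u) : ℂ) ∧
    (N : ℂ) ^ 2 + Jstar2 N (Complex.I * u) (-(Complex.I * v))
        + Jstar2 N (-(Complex.I * u)) (Complex.I * v)
      = Matrix.det !![(N : ℂ), (sineKernel N (u - v) : ℂ);
                      (sineKernel N (v - u) : ℂ), (N : ℂ)] := by
  set c : ℂ := (u : ℂ) - v with hc
  set W : ℂ := Complex.I * c with hW
  have ha : Complex.I * (u : ℂ) + -(Complex.I * v) = W := by rw [hW, hc]; ring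
  have hb : -(Complex.I * (u : ℂ)) + Complex.I * v = -W := by rw [hW, hc]; ring
  -- nonvanishing of denominators
  have hw2 : 1 - Complex.exp W ≠ 0 := by
    intro h0
    obtain ⟨n, hn⟩ := Complex.exp_eq_one_iff.mp (sub_eq_zero.mp h0).symm
    apply huv n
    have : ((u - v : ℝ) : ℂ) = ((2 * Real.pi * n : ℝ) : ℂ) := by
      apply mul_left_cancel₀ Complex.I_ne_zero
      rw [hW, hc] at hn
      push_cast at hn ⊢
      linear_combination hn
    exact_mod_cast this
  have hw1 : 1 - Complex.exp (-W) ≠ 0 := by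
    intro h0
    obtain ⟨n, hn⟩ := Complex.exp_eq_one_iff.mp (sub_eq_zero.mp h0).symm
    apply huv (-n)
    have : ((u - v : ℝ) : ℂ) = ((2 * Real.pi * (-n : ℤ) : ℝ) : ℂ) := by
      apply mul_left_cancel₀ Complex.I_ne_zero
      rw [hW, hc] at hn
      push_cast at hn ⊢
      linear_combination -hn
    exact_mod_cast this
  have hw2' : 1 - Complex.exp (- -W) ≠ 0 := by simpa using hw2
  -- half-angle exponentials
  set r : ℂ := Complex.exp (Complex.I * c / 2) with hr_def
  set R : ℂ := r ^ N with hR_def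
  have hr : r ≠ 0 := Complex.exp_ne_zero _
  have hR : R ≠ 0 := pow_ne_zero _ hr
  have hexpW : Complex.exp W = r * r := by
    rw [hr_def, ← Complex.exp_add, hW]; congr 1; ring
  have hexpnW : Complex.exp (-W) = (r * r)⁻¹ := by rw [Complex.exp_neg, hexpW]
  have hexpNW : Complex.exp ((N : ℂ) * W) = R * R := by
    rw [Complex.exp_nat_mul, hexpW, mul_pow, hR_def]
  have hexpnNW : Complex.exp (-(N : ℂ) * W) = (R * R)⁻¹ := by
    rw [neg_mul, Complex.exp_neg, hexpNW]
  have hexpNW' : Complex.exp (-(N : ℂ) * -W) = R * R := by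
    rw [show -(N : ℂ) * -W = (N : ℂ) * W by ring, hexpNW]
  -- sine kernel in terms of r, R
  have hdivI : ∀ a b : ℂ, (a * Complex.I / 2) / (b * Complex.I / 2) = a / b := by
    intro a b
    rcases eq_or_ne b 0 with hb0 | hb0
    · simp [hb0]
    · field_simp
  have hrinv : Complex.exp (-(Complex.I * c / 2)) = r⁻¹ := by
    rw [Complex.exp_neg, hr_def]
  have hRinv : Complex.exp (-((N : ℂ) * (Complex.I * c / 2))) = R⁻¹ := by
    rw [hR_def, hr_def, Complex.exp_neg, Complex.exp_nat_mul]
  have hS1 : ((sineKernel N (u - v) : ℝ) : ℂ) = (R⁻¹ - R) / (r⁻¹ - r) := by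
    rw [sineKernel]
    push_cast
    rw [Complex.sin, Complex.sin]
    rw [show Complex.exp (-((N : ℂ) * ((u:ℂ) - v) / 2) * Complex.I) = R⁻¹ by
          rw [← hRinv]; congr 1; rw [hc]; ring,
        show Complex.exp ((N : ℂ) * ((u:ℂ) - v) / 2 * Complex.I) = R by
          rw [hR_def, hr_def, ← Complex.exp_nat_mul]; congr 1; rw [hc]; ring,
        show Complex.exp (-(((u:ℂ) - v) / 2) * Complex.I) = r⁻¹ by
          rw [← hrinv]; congr 1; rw [hc]; ring,
        show Complex.exp (((u:ℂ) - v) / 2 * Complex.I) = r by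
          rw [hr_def]; congr 1; rw [hc]; ring]
    exact hdivI _ _
  have hS2 : ((sineKernel N (v - u) : ℝ) : ℂ) = (R⁻¹ - R) / (r⁻¹ - r) := by
    rw [show v - u = -(u - v) by ring, sineKernel_neg, hS1]
  -- main computation
  have main : (N : ℂ) ^ 2 + Jstar2 N (Complex.I * u) (-(Complex.I * v))
        + Jstar2 N (-(Complex.I * u)) (Complex.I * v)
      = (N : ℂ) ^ 2 - (sineKernel N (u - v) : ℂ) * (sineKernel N (v - u) : ℂ) := by
    rw [Jstar2, Jstar2, ha, hb, hS1, hS2]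
    rw [deriv_zlog W hw1, deriv_zlog (-W) hw2', zfun, zfun, neg_neg, zfun]
    rw [hexpnW, hexpNW', hexpnNW, hexpW]
    have := key r R hr hR
    linear_combination this
  refine ⟨main, ?_⟩
  rw [main, Matrix.det_fin_two_of]
  ring
end
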